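/- For every integer n ≥ 2 and every integer q ≥ 2, the value of the n-th cyclotomic polynomial at q satisfies (1 - 1/q) · q^{φ(n)} < Φ_n(q) < (1 - 1/q)^{-1} · q^{φ(n)}, where φ is Euler's totient function. -/

import Mathlib

open Polynomial Finset ArithmeticFunction Real
open scoped ArithmeticFunction.Moebius

private lemma sum_pow_le_geom {z : ℝ} (hz0 : 0 < z) (hz : z ≤ 1/2) (k : ℕ) (T : Finset ℕ)
    (hT : ∀ t ∈ T, k ≤ t) : ∑ t ∈ T, z ^ t ≤ 2 * z ^ k := by
  classical
  set N := max (T.sup _root_.id + 1) k with hN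
  have hsub : T ⊆ Finset.Ico k N := by
    intro t ht
    exact Finset.mem_Ico.2 ⟨hT t ht, lt_of_le_of_lt (Finset.le_sup (f := _root_.id) ht)
      (lt_of_lt_of_le (Nat.lt_succ_self _) (le_max_left _ _))⟩
  have h1 : ∑ t ∈ T, z ^ t ≤ ∑ t ∈ Finset.Ico k N, z ^ t :=
    Finset.sum_le_sum_of_subset_of_nonneg hsub (fun i _ _ => (pow_pos hz0 i).le)
  have hz1 : z ≠ 1 := by linarith
  have hkN : k ≤ N := le_max_right _ _
  rw [geom_sum_Ico' hz1 hkN] at h1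
  refine h1.trans ?_
  rw [div_le_iff₀ (by linarith : (0:ℝ) < 1 - z)]
  nlinarith [pow_pos hz0 N, pow_pos hz0 k]

private lemma squarefree_prod_primes {s : Finset ℕ} (hs : ∀ p ∈ s, p.Prime) :
    Squarefree (∏ p ∈ s, p) := by
  classical
  induction s using Finset.induction with
  | empty => simp [squarefree_one]
  | @insert a s ha ih =>
    rw [Finset.prod_insert ha, Nat.squarefree_mul_iff]
    refine ⟨Nat.Coprime.prod_right fun p hp => ?_, (hs a (Finset.mem_insert_self a s)).squarefree,
      ih fun p hp => hs p (Finset.mem_insert_of_mem hp)⟩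
    exact (Nat.coprime_primes (hs a (Finset.mem_insert_self a s))
      (hs p (Finset.mem_insert_of_mem hp))).2 (by rintro rfl; exact ha hp)

private lemma neg_log_le {y : ℝ} (hy : y < 1) : -Real.log (1 - y) ≤ y / (1 - y) := by
  have h1 : (0:ℝ) < 1 - y := by linarith
  have := Real.log_le_sub_one_of_pos (inv_pos.2 h1)
  rw [Real.log_inv] at this
  have h2 : (1 - y)⁻¹ - 1 = y / (1 - y) := by field_simp; ring
  linarith

private lemma le_neg_log {y : ℝ} (hy : y < 1) : y ≤ -Real.log (1 - y) := by
  have h1 : (0:ℝ) < 1 - y := by linarith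
  have := Real.log_le_sub_one_of_pos h1
  linarith

private lemma tail_lt {x : ℝ} (hx0 : 0 < x) (hx : x ≤ 1/2) {m p : ℕ} (hm : 1 ≤ m) (hp2 : 2 ≤ p)
    (T : Finset ℕ) (hT : ∀ t ∈ T, 3 ≤ t ∧ (p = 2 → t ≠ 4) ∧ (2 < p → p + 2 ≤ t)) :
    ∑ t ∈ T, -Real.log (1 - x ^ (m * t)) < -Real.log (1 - x ^ (m * p)) := by
  classical
  have hx1 : x ≤ 1 := by linarith
  set z : ℝ := x ^ m with hzdef
  have hz0 : 0 < z := pow_pos hx0 m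
  have hz : z ≤ 1/2 := by
    calc z ≤ x ^ 1 := pow_le_pow_of_le_one hx0.le hx1 hm
    _ ≤ 1/2 := by simpa using hx
  have hzpow : ∀ t : ℕ, x ^ (m * t) = z ^ t := fun t => by rw [hzdef, ← pow_mul]
  have hzk : ∀ k : ℕ, 1 ≤ k → z ^ k ≤ 1/2 := fun k hk =>
    (pow_le_pow_of_le_one hz0.le (by linarith) hk).trans (by simpa using hz)
  have hterm : ∀ t ∈ T, -Real.log (1 - x ^ (m * t)) ≤ (8/7) * z ^ t := by
    intro t ht
    obtain ⟨ht3, -, -⟩ := hT t ht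
    have h3 : z ^ t ≤ 1/8 := by
      calc z ^ t ≤ z ^ 3 := pow_le_pow_of_le_one hz0.le (by linarith) ht3
      _ ≤ (1/2:ℝ)^3 := pow_le_pow_left₀ hz0.le hz 3
      _ = 1/8 := by norm_num
    have h0 : (0:ℝ) < z ^ t := pow_pos hz0 t
    have := neg_log_le (by linarith : z ^ t < 1)
    rw [hzpow t]
    refine this.trans ?_
    rw [div_le_iff₀ (by linarith : (0:ℝ) < 1 - z ^ t)]
    nlinarith
  have hsum : ∑ t ∈ T, -Real.log (1 - x ^ (m * t)) ≤ (8/7) * ∑ t ∈ T, z ^ t := by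
    rw [Finset.mul_sum]; exact Finset.sum_le_sum hterm
  have htarget : z ^ p ≤ -Real.log (1 - x ^ (m * p)) := by
    rw [hzpow p]
    exact le_neg_log (by linarith [hzk p (by omega)])
  rcases eq_or_lt_of_le hp2 with hp | hp
  · have hT5 : ∀ t ∈ T.erase 3, 5 ≤ t := by
      intro t ht
      obtain ⟨ht3, ht4, -⟩ := hT t (Finset.mem_of_mem_erase ht)
      have := Finset.ne_of_mem_erase ht
      have := ht4 hp.symm
      omega
    have h5 : ∑ t ∈ T.erase 3, z ^ t ≤ 2 * z ^ 5 := sum_pow_le_geom hz0 hz 5 _ hT5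
    have hsplit : ∑ t ∈ T, z ^ t ≤ z ^ 3 + ∑ t ∈ T.erase 3, z ^ t := by
      by_cases h3 : 3 ∈ T
      · rw [← Finset.add_sum_erase _ _ h3]
      · rw [Finset.erase_eq_of_notMem h3]
        nlinarith [pow_pos hz0 3]
    have hz2 : z ^ 2 ≤ 1/4 := by nlinarith
    have hz5 : z ^ 5 ≤ (1/4) * z ^ 3 := by
      have h := mul_le_mul_of_nonneg_left hz2 (pow_pos hz0 3).le
      calc z ^ 5 = z ^ 3 * z ^ 2 := by ring
      _ ≤ z ^ 3 * (1/4) := h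
      _ = (1/4) * z ^ 3 := by ring
    have hz32 : z ^ 3 ≤ (1/2) * z ^ 2 := by
      have h := mul_le_mul_of_nonneg_left hz (pow_pos hz0 2).le
      calc z ^ 3 = z ^ 2 * z := by ring
      _ ≤ z ^ 2 * (1/2) := h
      _ = (1/2) * z ^ 2 := by ring
    calc ∑ t ∈ T, -Real.log (1 - x ^ (m * t)) ≤ (8/7) * ∑ t ∈ T, z ^ t := hsum
      _ ≤ (8/7) * ((3/2) * z ^ 3) := by linarith
      _ ≤ (6/7) * z ^ 2 := by linarith
      _ < z ^ 2 := by nlinarith [pow_pos hz0 2]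
      _ = z ^ p := by rw [← hp]
      _ ≤ _ := htarget
  · have hTp : ∀ t ∈ T, p + 2 ≤ t := fun t ht => (hT t ht).2.2 hp
    have h1 : ∑ t ∈ T, z ^ t ≤ 2 * z ^ (p + 2) := sum_pow_le_geom hz0 hz _ _ hTp
    have hzp : 0 < z ^ p := pow_pos hz0 p
    have h2 : z ^ (p + 2) = z ^ p * z ^ 2 := by ring
    calc ∑ t ∈ T, -Real.log (1 - x ^ (m * t)) ≤ (8/7) * ∑ t ∈ T, z ^ t := hsum
      _ ≤ (8/7) * (2 * z ^ (p + 2)) := by linarith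
      _ ≤ (16/7) * (z ^ p * (1/4)) := by
          rw [h2]
          have hz2 : z ^ 2 ≤ 1/4 := by nlinarith
          have h := mul_le_mul_of_nonneg_left hz2 hzp.le
          linarith
      _ < z ^ p := by nlinarith
      _ ≤ _ := htarget

private lemma t_bounds {n t : ℕ} (hn : 2 ≤ n) (ht : t ∣ n) (hsq : Squarefree t) (h1 : t ≠ 1)
    (hp : t ≠ n.minFac) :
    3 ≤ t ∧ (n.minFac = 2 → t ≠ 4) ∧ (2 < n.minFac → n.minFac + 2 ≤ t) := by
  have hn0 : n ≠ 0 := by omega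
  have ht0 : t ≠ 0 := by rintro rfl; exact hn0 (Nat.zero_dvd.mp ht)
  have ht2 : 2 ≤ t := by omega
  have hP : n.minFac.Prime := Nat.minFac_prime (by omega)
  have h3 : 3 ≤ t := by
    rcases Nat.lt_or_ge t 3 with h | h
    · exfalso
      have ht2' : t = 2 := by omega
      have h2n : 2 ∣ n := ht2' ▸ ht
      have := Nat.minFac_le_of_dvd (le_refl 2) h2n
      have := hP.two_le
      omega
    · exact h
  refine ⟨h3, fun _ h4 => ?_, fun hPgt => ?_⟩
  · rw [h4] at hsq
    exact absurd (hsq 2 (by norm_num)) (by norm_num [Nat.isUnit_iff])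
  · have hnodd : ¬ (2 ∣ n) := by
      intro h2n
      have := Nat.minFac_le_of_dvd (le_refl 2) h2n
      omega
    have htodd : ¬ (2 ∣ t) := fun h2t => hnodd (h2t.trans ht)
    set ρ := t.minFac with hρdef
    have hρ : ρ.Prime := Nat.minFac_prime h1
    have hρdvd : ρ ∣ t := Nat.minFac_dvd t
    have hρP : n.minFac ≤ ρ := Nat.minFac_le_of_dvd hρ.two_le (hρdvd.trans ht)
    by_cases hteq : t = ρ
    · have htP : n.minFac ≤ t := hteq ▸ hρP
      have hPodd : ¬ (2 ∣ n.minFac) := by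
        intro h2P
        have := hP.two_le
        have hP2 : n.minFac = 2 := by
          rcases (Nat.Prime.eq_one_or_self_of_dvd hP 2 h2P) with h | h <;> omega
        omega
      omega
    · have hmul : ρ * (t / ρ) = t := Nat.mul_div_cancel' hρdvd
      have hd1 : t / ρ ≠ 1 := fun h => hteq (by rw [← hmul, h, mul_one])
      have hd0 : t / ρ ≠ 0 := by
        intro h; rw [h, mul_zero] at hmul; exact ht0 hmul.symm
      have h2ρ : 2 * ρ ≤ t := by
        calc 2 * ρ = ρ * 2 := by ring
        _ ≤ ρ * (t / ρ) := Nat.mul_le_mul_left ρ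
          (lt_of_le_of_ne (Nat.one_le_iff_ne_zero.2 hd0) (Ne.symm hd1))
        _ = t := hmul
      omega

private lemma cyclotomic_eval_bounds_real (n : ℕ) (hn : 2 ≤ n) (Q : ℝ) (hQ : 2 ≤ Q) :
    (1 - Q⁻¹) * Q ^ n.totient < (Polynomial.cyclotomic n ℝ).eval Q ∧
    (Polynomial.cyclotomic n ℝ).eval Q < (1 - Q⁻¹)⁻¹ * Q ^ n.totient := by
  classical
  have hQ1 : (1:ℝ) < Q := by linarith
  have hQ0 : (0:ℝ) < Q := by linarith
  set x : ℝ := Q⁻¹ with hxdef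
  have hx0 : 0 < x := inv_pos.2 hQ0
  have hx2 : x ≤ 1/2 := by
    rw [hxdef]
    rw [show (1:ℝ)/2 = 2⁻¹ by norm_num]
    exact inv_anti₀ (by norm_num) hQ
  have hx1 : x < 1 := by linarith
  have hxe1 : ∀ e : ℕ, e ≠ 0 → x ^ e < 1 := fun e he => pow_lt_one₀ hx0.le hx1 he
  have hpos : ∀ d : ℕ, 0 < (cyclotomic d ℝ).eval Q := fun d => cyclotomic_pos' d hQ1
  -- Step A/B: Möbius inversion for logs
  have hA : ∀ k : ℕ, k > 0 → ∑ i ∈ k.divisors, Real.log ((cyclotomic i ℝ).eval Q)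
      = Real.log (Q ^ k - 1) := by
    intro k hk
    rw [← Real.log_prod (fun i _ => (hpos i).ne')]
    congr 1
    rw [← Polynomial.eval_prod, Polynomial.prod_cyclotomic_eq_X_pow_sub_one hk ℝ]
    simp
  have hB := ArithmeticFunction.sum_eq_iff_sum_smul_moebius_eq.mp hA n (by omega)
  have hC := (ArithmeticFunction.sum_eq_iff_sum_smul_moebius_eq
      (f := fun i : ℕ => (i.totient : ℝ)) (g := fun k : ℕ => (k : ℝ))).mp
    (fun k _ => by exact_mod_cast congrArg (Nat.cast : ℕ → ℝ) (Nat.sum_totient k)) n (by omega)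
  have hG : Real.log ((cyclotomic n ℝ).eval Q) - (n.totient : ℝ) * Real.log Q
      = ∑ v ∈ n.divisorsAntidiagonal, (μ v.1 : ℝ) * Real.log (1 - x ^ v.2) := by
    rw [← hB, ← hC, Finset.sum_mul, ← Finset.sum_sub_distrib]
    refine Finset.sum_congr rfl fun v hv => ?_
    have he : v.2 ≠ 0 := Nat.right_ne_zero_of_mem_divisorsAntidiagonal hv
    have h1m : (0:ℝ) < 1 - x ^ v.2 := by linarith [hxe1 v.2 he]
    have hfac : Q ^ v.2 - 1 = Q ^ v.2 * (1 - x ^ v.2) := by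
      rw [hxdef, mul_sub, mul_one, inv_pow, mul_inv_cancel₀ (pow_ne_zero _ hQ0.ne')]
    rw [zsmul_eq_mul, zsmul_eq_mul, hfac, Real.log_mul (pow_ne_zero _ hQ0.ne') h1m.ne',
      Real.log_pow]
    ring
  rw [Nat.sum_divisorsAntidiagonal' (f := fun d e => (μ d : ℝ) * Real.log (1 - x ^ e))] at hG
  -- arithmetic setup
  have hn0 : n ≠ 0 := by omega
  set r : ℕ := ∏ p ∈ n.primeFactors, p with hrdef
  have hrdvd : r ∣ n := Nat.prod_primeFactors_dvd n
  have hrsq : Squarefree r :=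
    squarefree_prod_primes fun p hp => Nat.prime_of_mem_primeFactors hp
  set p := n.minFac with hpdef
  have hp : p.Prime := Nat.minFac_prime (by omega)
  have hpr : p ∣ r :=
    Finset.dvd_prod_of_mem _ (Nat.mem_primeFactors.mpr ⟨hp, Nat.minFac_dvd n, hn0⟩)
  set m := n / r with hmdef
  have hmr : m * r = n := Nat.div_mul_cancel hrdvd
  have hm0 : m ≠ 0 := by rintro h; rw [h, zero_mul] at hmr; exact hn0 hmr.symm
  have hm1 : 1 ≤ m := Nat.one_le_iff_ne_zero.2 hm0
  have hmdvd : m ∣ n := ⟨r, hmr.symm⟩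
  set w := r / p with hwdef
  have hw : r = p * w := (Nat.mul_div_cancel' hpr).symm
  have hmpdvd : m * p ∣ n := ⟨w, by rw [← hmr, hw]; ring⟩
  have hnm : n / m = r := by rw [← hmr, Nat.mul_div_cancel_left r (Nat.pos_of_ne_zero hm0)]
  have hnmp : n / (m * p) = w := by
    have hmp0 : 0 < m * p := Nat.mul_pos (Nat.pos_of_ne_zero hm0) hp.pos
    have hh : n = (m * p) * w := by rw [← hmr, hw]; ring
    rw [hh, Nat.mul_div_cancel_left _ hmp0]
  have hne : m ≠ m * p := by
    intro h
    have := hp.two_le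
    nlinarith [Nat.pos_of_ne_zero hm0]
  -- moebius facts
  have hsqp : Nat.Coprime p w ∧ Squarefree w := by
    have h := hrsq
    rw [hw, Nat.squarefree_mul_iff] at h
    exact ⟨h.1, h.2.2⟩
  have hmu_rp : μ w = - μ r := by
    have h : μ r = μ p * μ w := by
      rw [hw, isMultiplicative_moebius.map_mul_of_coprime hsqp.1]
    rw [moebius_apply_prime hp] at h
    omega
  have hmuabs : |(μ r : ℝ)| = 1 := by
    rw [moebius_apply_of_squarefree hrsq]
    push_cast
    rw [abs_pow, abs_neg, abs_one, one_pow]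
  -- split the divisor sum
  have hmmem : m ∈ n.divisors := Nat.mem_divisors.2 ⟨hmdvd, hn0⟩
  have hmpmem : m * p ∈ n.divisors := Nat.mem_divisors.2 ⟨hmpdvd, hn0⟩
  have hsub : ({m, m * p} : Finset ℕ) ⊆ n.divisors := by
    intro a ha
    rcases Finset.mem_insert.1 ha with h | h
    · exact h ▸ hmmem
    · exact (Finset.mem_singleton.1 h) ▸ hmpmem
  have hunion : n.divisors = ({m, m * p} : Finset ℕ) ∪ (n.divisors \ {m, m * p}) :=
    (Finset.union_sdiff_of_subset hsub).symm
  rw [hunion, Finset.sum_union Finset.disjoint_sdiff, Finset.sum_pair hne, hnm, hnmp,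
    hmu_rp] at hG
  set L1 : ℝ := -Real.log (1 - x) with hL1def
  set Lm : ℝ := -Real.log (1 - x ^ m) with hLmdef
  set Lmp : ℝ := -Real.log (1 - x ^ (m * p)) with hLmpdef
  set Rs : ℝ := ∑ e ∈ n.divisors \ {m, m * p}, (μ (n / e) : ℝ) * Real.log (1 - x ^ e) with hRdef
  -- bound |Rs|
  set D : Finset ℕ := (n.divisors \ {m, m * p}).filter (fun e => Squarefree (n / e)) with hDdef
  have hRabs : |Rs| ≤ ∑ e ∈ D, -Real.log (1 - x ^ e) := by
    rw [hRdef]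
    refine (Finset.abs_sum_le_sum_abs _ _).trans ?_
    rw [← Finset.sum_filter_add_sum_filter_not (n.divisors \ {m, m * p})
      (fun e => Squarefree (n / e))]
    have hz : ∑ e ∈ (n.divisors \ {m, m * p}).filter (fun e => ¬ Squarefree (n / e)),
        |(μ (n / e) : ℝ) * Real.log (1 - x ^ e)| = 0 := by
      apply Finset.sum_eq_zero
      intro e he
      rw [moebius_eq_zero_of_not_squarefree (Finset.mem_filter.1 he).2]
      simp
    rw [hz, add_zero]
    apply Finset.sum_le_sum
    intro e he
    have he' := Finset.mem_filter.1 he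
    have hediv : e ∈ n.divisors := (Finset.mem_sdiff.1 he'.1).1
    have he0 : e ≠ 0 := Nat.pos_of_mem_divisors hediv |>.ne'
    have hxe : x ^ e < 1 := hxe1 e he0
    have hlogneg : Real.log (1 - x ^ e) < 0 :=
      Real.log_neg (by linarith) (by linarith [pow_pos hx0 e])
    rw [abs_mul, abs_of_neg hlogneg]
    have : |(μ (n / e) : ℝ)| = 1 := by
      rw [moebius_apply_of_squarefree he'.2]
      push_cast
      rw [abs_pow, abs_neg, abs_one, one_pow]
    rw [this, one_mul]
  -- facts about elements of D
  have hDfact : ∀ e ∈ D, m * (e / m) = e ∧ (e / m) ∣ r ∧ e / m ≠ 1 ∧ e / m ≠ p := by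
    intro e he
    have he' := Finset.mem_filter.1 he
    have hesd := Finset.mem_sdiff.1 he'.1
    have hediv : e ∣ n := (Nat.mem_divisors.1 hesd.1).1
    have hem : e ≠ m := fun h => hesd.2 (by simp [h])
    have hemp : e ≠ m * p := fun h => hesd.2 (by simp [h])
    set s := n / e with hsdef
    have hssq : Squarefree s := he'.2
    have hes : e * s = n := Nat.mul_div_cancel' hediv
    have hs0 : s ≠ 0 := by rintro h; rw [h, mul_zero] at hes; exact hn0 hes.symm
    have hsdvdn : s ∣ n := ⟨e, by rw [← hes]; ring⟩
    have hsdvdr : s ∣ r := by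
      rw [← Nat.prod_primeFactors_of_squarefree hssq, hrdef]
      exact Finset.prod_dvd_prod_of_subset _ _ _ (Nat.primeFactors_mono hsdvdn hn0)
    have hrs : (r / s) * s = r := Nat.div_mul_cancel hsdvdr
    have hemrs : e = m * (r / s) := by
      have h1 : (m * (r / s)) * s = n := by
        rw [mul_assoc, hrs, hmr]
      exact (Nat.eq_of_mul_eq_mul_right (Nat.pos_of_ne_zero hs0) (by rw [hes, h1])).symm
    have hmdvde : m ∣ e := ⟨r / s, hemrs⟩
    have hediv_m : e / m = r / s := by
      rw [hemrs, Nat.mul_div_cancel_left _ (Nat.pos_of_ne_zero hm0)]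
    refine ⟨by rw [hediv_m, ← hemrs], ?_, ?_, ?_⟩
    · rw [hediv_m]; exact ⟨s, hrs.symm⟩
    · rw [hediv_m]
      intro h
      exact hem (by rw [hemrs, h, mul_one])
    · rw [hediv_m]
      intro h
      exact hemp (by rw [hemrs, h])
  -- image
  set T : Finset ℕ := D.image (fun e => e / m) with hTdef
  have hinj : ∀ a ∈ D, ∀ b ∈ D, a / m = b / m → a = b := by
    intro a ha b hb h
    have h1 := (hDfact a ha).1
    have h2 := (hDfact b hb).1
    rw [← h1, ← h2, h]
  have hDT : ∑ e ∈ D, -Real.log (1 - x ^ e) = ∑ t ∈ T, -Real.log (1 - x ^ (m * t)) := by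
    rw [hTdef, Finset.sum_image hinj]
    exact Finset.sum_congr rfl fun e he => by rw [(hDfact e he).1]
  have hThyp : ∀ t ∈ T, 3 ≤ t ∧ (p = 2 → t ≠ 4) ∧ (2 < p → p + 2 ≤ t) := by
    intro t ht
    obtain ⟨e, he, rfl⟩ := Finset.mem_image.1 ht
    obtain ⟨-, htr, ht1, htp⟩ := hDfact e he
    exact t_bounds hn (htr.trans hrdvd) (hrsq.squarefree_of_dvd htr) ht1 htp
  have hRlt : |Rs| < Lmp := by
    refine lt_of_le_of_lt (hRabs.trans hDT.le) ?_
    exact tail_lt hx0 hx2 hm1 hp.two_le T hThyp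
  -- pair term
  have hLmLmp : Lmp ≤ Lm := by
    rw [hLmdef, hLmpdef]
    have h1 : x ^ (m * p) ≤ x ^ m :=
      pow_le_pow_of_le_one hx0.le hx1.le (Nat.le_mul_of_pos_right m hp.pos)
    have h2 : x ^ m < 1 := hxe1 m hm0
    have := Real.log_le_log (by nlinarith [pow_pos hx0 m]) (by linarith : 1 - x ^ m ≤ 1 - x ^ (m * p))
    linarith
  have hLmL1 : Lm ≤ L1 := by
    rw [hLmdef, hL1def]
    have h1 : x ^ m ≤ x := by
      calc x ^ m ≤ x ^ 1 := pow_le_pow_of_le_one hx0.le hx1.le hm1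
      _ = x := pow_one x
    have := Real.log_le_log (by linarith) (by linarith : 1 - x ≤ 1 - x ^ m)
    linarith
  -- assemble |G| < L1
  have hGabs : |Real.log ((cyclotomic n ℝ).eval Q) - (n.totient : ℝ) * Real.log Q| < L1 := by
    rw [hG]
    have hpair : (μ r : ℝ) * Real.log (1 - x ^ m)
        + ((- μ r : ℤ) : ℝ) * Real.log (1 - x ^ (m * p))
        = (μ r : ℝ) * (Lmp - Lm) := by
      rw [hLmdef, hLmpdef]; push_cast; ring
    rw [hpair]
    refine lt_of_le_of_lt (abs_add_le _ _) ?_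
    have h1 : |(μ r : ℝ) * (Lmp - Lm)| = Lm - Lmp := by
      rw [abs_mul, hmuabs, one_mul, abs_of_nonpos (by linarith)]
      ring
    rw [h1]
    have := hRlt
    linarith
  -- final conversion
  have hΦ : 0 < (cyclotomic n ℝ).eval Q := hpos n
  have h1x : (0:ℝ) < 1 - x := by linarith
  have hQφ : (0:ℝ) < Q ^ n.totient := pow_pos hQ0 _
  have hlogQφ : Real.log (Q ^ n.totient) = (n.totient : ℝ) * Real.log Q := Real.log_pow _ _
  have habs := abs_lt.1 hGabs
  constructor
  · have hlt : Real.log ((1 - x) * Q ^ n.totient) < Real.log ((cyclotomic n ℝ).eval Q) := by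
      rw [Real.log_mul h1x.ne' hQφ.ne', hlogQφ]
      have : -L1 = Real.log (1 - x) := by rw [hL1def]; ring
      linarith [habs.1]
    have := (Real.log_lt_log_iff (by positivity) hΦ).1 hlt
    exact this
  · have hlt : Real.log ((cyclotomic n ℝ).eval Q) < Real.log ((1 - x)⁻¹ * Q ^ n.totient) := by
      rw [Real.log_mul (by positivity) hQφ.ne', hlogQφ, Real.log_inv]
      have : L1 = -Real.log (1 - x) := hL1def
      linarith [habs.2]
    exact (Real.log_lt_log_iff hΦ (by positivity)).1 hlt

theorem cyclotomic_eval_bounds (n : ℕ) (hn : 2 ≤ n) (q : ℤ) (hq : 2 ≤ q) :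
    (1 - (q : ℝ)⁻¹) * (q : ℝ) ^ n.totient <
      (Polynomial.cyclotomic n ℝ).eval (q : ℝ) ∧
    (Polynomial.cyclotomic n ℝ).eval (q : ℝ) <
      (1 - (q : ℝ)⁻¹)⁻¹ * (q : ℝ) ^ n.totient := by
  exact cyclotomic_eval_bounds_real n hn (q : ℝ) (by exact_mod_cast hq)
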